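/- Let Ω ⊆ ℝⁿ be a bounded open set and let λ ∈ ℝ. If u : Ω → ℝ is continuous, positive, and a viscosity solution of −min{|∇u| − λu, Δ∞u} = 0 in Ω, then v = log u is a viscosity solution of −min{|∇v| − λ, Δ∞v + |∇v|⁴} = 0 in Ω. -/

import Mathlib

open scoped Topology InnerProductSpace
open Filter

/-- The infinity Laplacian `Δ∞φ(x) = ⟨D²φ(x)·∇φ(x), ∇φ(x)⟩`. -/
noncomputable def infLap {n : ℕ} (φ : EuclideanSpace ℝ (Fin n) → ℝ)
    (x : EuclideanSpace ℝ (Fin n)) : ℝ :=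
  ⟪(fderiv ℝ (gradient φ) x) (gradient φ x), gradient φ x⟫_ℝ

/-- Viscosity supersolution of `-min{|∇u| - λu, Δ∞u} = 0` in `Ω`. -/
def IsViscSupersolEig {n : ℕ} (lam : ℝ) (Ω : Set (EuclideanSpace ℝ (Fin n)))
    (u : EuclideanSpace ℝ (Fin n) → ℝ) : Prop :=
  ∀ x₀ ∈ Ω, ∀ φ : EuclideanSpace ℝ (Fin n) → ℝ, ContDiffAt ℝ 2 φ x₀ → φ x₀ = u x₀ →
    IsLocalMinOn (fun x => u x - φ x) Ω x₀ →
    min (‖gradient φ x₀‖ - lam * φ x₀) (infLap φ x₀) ≤ 0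

/-- Viscosity subsolution of `-min{|∇u| - λu, Δ∞u} = 0` in `Ω`. -/
def IsViscSubsolEig {n : ℕ} (lam : ℝ) (Ω : Set (EuclideanSpace ℝ (Fin n)))
    (u : EuclideanSpace ℝ (Fin n) → ℝ) : Prop :=
  ∀ x₀ ∈ Ω, ∀ φ : EuclideanSpace ℝ (Fin n) → ℝ, ContDiffAt ℝ 2 φ x₀ → φ x₀ = u x₀ →
    IsLocalMaxOn (fun x => u x - φ x) Ω x₀ →
    0 ≤ min (‖gradient φ x₀‖ - lam * φ x₀) (infLap φ x₀)

/-- Viscosity solution of `-min{|∇u| - λu, Δ∞u} = 0` in `Ω`. -/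
def IsViscSolEig {n : ℕ} (lam : ℝ) (Ω : Set (EuclideanSpace ℝ (Fin n)))
    (u : EuclideanSpace ℝ (Fin n) → ℝ) : Prop :=
  IsViscSupersolEig lam Ω u ∧ IsViscSubsolEig lam Ω u

/-- Viscosity supersolution of `-min{|∇v| - λ, Δ∞v + |∇v|⁴} = 0` in `Ω`. -/
def IsViscSupersolLog {n : ℕ} (lam : ℝ) (Ω : Set (EuclideanSpace ℝ (Fin n)))
    (v : EuclideanSpace ℝ (Fin n) → ℝ) : Prop :=
  ∀ x₀ ∈ Ω, ∀ φ : EuclideanSpace ℝ (Fin n) → ℝ, ContDiffAt ℝ 2 φ x₀ → φ x₀ = v x₀ →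
    IsLocalMinOn (fun x => v x - φ x) Ω x₀ →
    min (‖gradient φ x₀‖ - lam) (infLap φ x₀ + ‖gradient φ x₀‖ ^ 4) ≤ 0

/-- Viscosity subsolution of `-min{|∇v| - λ, Δ∞v + |∇v|⁴} = 0` in `Ω`. -/
def IsViscSubsolLog {n : ℕ} (lam : ℝ) (Ω : Set (EuclideanSpace ℝ (Fin n)))
    (v : EuclideanSpace ℝ (Fin n) → ℝ) : Prop :=
  ∀ x₀ ∈ Ω, ∀ φ : EuclideanSpace ℝ (Fin n) → ℝ, ContDiffAt ℝ 2 φ x₀ → φ x₀ = v x₀ →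
    IsLocalMaxOn (fun x => v x - φ x) Ω x₀ →
    0 ≤ min (‖gradient φ x₀‖ - lam) (infLap φ x₀ + ‖gradient φ x₀‖ ^ 4)

/-- Viscosity solution of `-min{|∇v| - λ, Δ∞v + |∇v|⁴} = 0` in `Ω`. -/
def IsViscSolLog {n : ℕ} (lam : ℝ) (Ω : Set (EuclideanSpace ℝ (Fin n)))
    (v : EuclideanSpace ℝ (Fin n) → ℝ) : Prop :=
  IsViscSupersolLog lam Ω v ∧ IsViscSubsolLog lam Ω v



section aux
variable {n : ℕ}
local notation "E" => EuclideanSpace ℝ (Fin n)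

lemma fderiv_apply_eq_inner_gradient (φ : E → ℝ) (x v : E) :
    fderiv ℝ φ x v = ⟪gradient φ x, v⟫_ℝ := by
  rw [gradient, InnerProductSpace.toDual_symm_apply]

lemma grad_exp_of_diff (φ : E → ℝ) (x : E) (h : DifferentiableAt ℝ φ x) :
    gradient (fun y => Real.exp (φ y)) x = Real.exp (φ x) • gradient φ x := by
  have h1 : HasFDerivAt φ (fderiv ℝ φ x) x := h.hasFDerivAt
  have h2 := h1.exp
  rw [hasFDerivAt_iff_hasGradientAt] at h2
  rw [h2.gradient, map_smul, gradient]

lemma infLap_exp (φ : E → ℝ) (x₀ : E) (hφ : ContDiffAt ℝ 2 φ x₀) :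
    infLap (fun y => Real.exp (φ y)) x₀
      = Real.exp (φ x₀) ^ 3 * (infLap φ x₀ + ‖gradient φ x₀‖ ^ 4) := by
  set e := Real.exp (φ x₀) with he
  set g₀ := gradient φ x₀ with hg₀
  -- gradient of φ is C¹ at x₀
  have hfd : ContDiffAt ℝ 1 (fderiv ℝ φ) x₀ := hφ.fderiv_right (by norm_num)
  have hgrad : ContDiffAt ℝ 1 (gradient φ) x₀ := by
    have := ((InnerProductSpace.toDual ℝ E).symm.contDiff (n := 1)).contDiffAt.comp x₀ hfd
    exact this
  have hGdiff : DifferentiableAt ℝ (gradient φ) x₀ := hgrad.differentiableAt (by norm_num)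
  -- eventually differentiable
  have hev : ∀ᶠ x in 𝓝 x₀, DifferentiableAt ℝ φ x := by
    filter_upwards [hφ.eventually (by norm_num)] with x hx
    exact hx.differentiableAt (by norm_num)
  have heq : gradient (fun y => Real.exp (φ y)) =ᶠ[𝓝 x₀]
      fun x => Real.exp (φ x) • gradient φ x := by
    filter_upwards [hev] with x hx using grad_exp_of_diff φ x hx
  -- derivative of the RHS
  have hc : HasFDerivAt (fun y => Real.exp (φ y)) (e • fderiv ℝ φ x₀) x₀ :=
    (hφ.differentiableAt (by norm_num)).hasFDerivAt.exp
  have hF : HasFDerivAt (fun x => Real.exp (φ x) • gradient φ x)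
      (e • fderiv ℝ (gradient φ) x₀ + (e • fderiv ℝ φ x₀).smulRight g₀) x₀ :=
    hc.smul hGdiff.hasFDerivAt
  have hfderiv : fderiv ℝ (gradient (fun y => Real.exp (φ y))) x₀
      = e • fderiv ℝ (gradient φ) x₀ + (e • fderiv ℝ φ x₀).smulRight g₀ := by
    rw [heq.fderiv_eq, hF.fderiv]
  have hgx : gradient (fun y => Real.exp (φ y)) x₀ = e • g₀ :=
    grad_exp_of_diff φ x₀ (hφ.differentiableAt (by norm_num))
  rw [infLap, hfderiv, hgx]
  simp only [ContinuousLinearMap.add_apply, ContinuousLinearMap.smul_apply,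
    ContinuousLinearMap.smulRight_apply, map_smul]
  rw [fderiv_apply_eq_inner_gradient]
  have hinner : ⟪g₀, g₀⟫_ℝ = ‖g₀‖ ^ 2 := real_inner_self_eq_norm_sq g₀
  simp only [real_inner_smul_left, real_inner_smul_right, inner_add_left]
  rw [hinner, infLap]
  simp only [smul_eq_mul]
  ring

lemma norm_grad_exp (φ : E → ℝ) (x₀ : E) (hφ : ContDiffAt ℝ 2 φ x₀) :
    ‖gradient (fun y => Real.exp (φ y)) x₀‖ = Real.exp (φ x₀) * ‖gradient φ x₀‖ := by
  rw [grad_exp_of_diff φ x₀ (hφ.differentiableAt (by norm_num)), norm_smul,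
    Real.norm_eq_abs, abs_of_pos (Real.exp_pos _)]

end aux

/-- if `u` is a positive continuous viscosity solution of
`-min{|∇u| - λu, Δ∞u} = 0` in a bounded open set `Ω`, then `v = log u` is a viscosity solution
of `-min{|∇v| - λ, Δ∞v + |∇v|⁴} = 0` in `Ω`. -/
theorem log_of_eigenfunction_is_viscosity_solution {n : ℕ}
    (Ω : Set (EuclideanSpace ℝ (Fin n))) (hΩ : IsOpen Ω) (hbdd : Bornology.IsBounded Ω)
    (lam : ℝ) (u : EuclideanSpace ℝ (Fin n) → ℝ)
    (hu : ContinuousOn u Ω) (hupos : ∀ x ∈ Ω, 0 < u x)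
    (hsol : IsViscSolEig lam Ω u) :
    IsViscSolLog lam Ω (fun x => Real.log (u x)) := by
  constructor
  · -- supersolution
    intro x₀ hx₀ φ hφC hφval hmin
    set ψ := fun x => Real.exp (φ x) with hψ
    have hψC : ContDiffAt ℝ 2 ψ x₀ := Real.contDiff_exp.contDiffAt.comp x₀ hφC
    have hux : 0 < u x₀ := hupos x₀ hx₀
    have hψval : ψ x₀ = u x₀ := by
      simp only [hψ, hφval]
      exact Real.exp_log hux
    have hmin' : IsLocalMinOn (fun x => u x - ψ x) Ω x₀ := by
      have hmem : ∀ᶠ x in 𝓝[Ω] x₀, x ∈ Ω := eventually_mem_nhdsWithin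
      filter_upwards [hmin, hmem] with x h1 h2
      have h1' : Real.log (u x₀) - φ x₀ ≤ Real.log (u x) - φ x := h1
      have hle : φ x ≤ Real.log (u x) := by
        rw [hφval] at h1'; linarith
      have : ψ x ≤ u x := by
        calc ψ x = Real.exp (φ x) := rfl
        _ ≤ Real.exp (Real.log (u x)) := Real.exp_le_exp.mpr hle
        _ = u x := Real.exp_log (hupos x h2)
      simp only [hψval]
      linarith
    have hres := hsol.1 x₀ hx₀ ψ hψC hψval hmin'
    have hn := norm_grad_exp φ x₀ hφC
    have hi := infLap_exp φ x₀ hφC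
    have he : ψ x₀ = Real.exp (φ x₀) := rfl
    set e := Real.exp (φ x₀) with hedef
    have hepos : 0 < e := Real.exp_pos _
    rw [show (fun y => Real.exp (φ y)) = ψ from rfl] at hn hi
    rw [hn, hi, he] at hres
    have he3 : (0:ℝ) < e ^ 3 := pow_pos hepos 3
    rcases min_le_iff.mp hres with h | h
    · apply min_le_iff.mpr; left
      have : e * (‖gradient φ x₀‖ - lam) ≤ e * 0 := by ring_nf; ring_nf at h; linarith
      exact le_of_mul_le_mul_left this hepos
    · apply min_le_iff.mpr; right
      have : e ^ 3 * (infLap φ x₀ + ‖gradient φ x₀‖ ^ 4) ≤ e ^ 3 * 0 := by linarith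
      exact le_of_mul_le_mul_left this he3
  · -- subsolution
    intro x₀ hx₀ φ hφC hφval hmax
    set ψ := fun x => Real.exp (φ x) with hψ
    have hψC : ContDiffAt ℝ 2 ψ x₀ := Real.contDiff_exp.contDiffAt.comp x₀ hφC
    have hux : 0 < u x₀ := hupos x₀ hx₀
    have hψval : ψ x₀ = u x₀ := by
      simp only [hψ, hφval]
      exact Real.exp_log hux
    have hmax' : IsLocalMaxOn (fun x => u x - ψ x) Ω x₀ := by
      have hmem : ∀ᶠ x in 𝓝[Ω] x₀, x ∈ Ω := eventually_mem_nhdsWithin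
      filter_upwards [hmax, hmem] with x h1 h2
      have h1' : Real.log (u x) - φ x ≤ Real.log (u x₀) - φ x₀ := h1
      have hle : Real.log (u x) ≤ φ x := by
        rw [hφval] at h1'; linarith
      have : u x ≤ ψ x := by
        calc u x = Real.exp (Real.log (u x)) := (Real.exp_log (hupos x h2)).symm
        _ ≤ Real.exp (φ x) := Real.exp_le_exp.mpr hle
        _ = ψ x := rfl
      simp only [hψval]
      linarith
    have hres := hsol.2 x₀ hx₀ ψ hψC hψval hmax'
    have hn := norm_grad_exp φ x₀ hφC
    have hi := infLap_exp φ x₀ hφC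
    have he : ψ x₀ = Real.exp (φ x₀) := rfl
    set e := Real.exp (φ x₀) with hedef
    have hepos : 0 < e := Real.exp_pos _
    rw [show (fun y => Real.exp (φ y)) = ψ from rfl] at hn hi
    rw [hn, hi, he] at hres
    have he3 : (0:ℝ) < e ^ 3 := pow_pos hepos 3
    have h1 := le_min_iff.mp hres
    apply le_min_iff.mpr
    constructor
    · have : e * 0 ≤ e * (‖gradient φ x₀‖ - lam) := by
        have := h1.1; ring_nf; ring_nf at this; linarith
      linarith [le_of_mul_le_mul_left this hepos]
    · have : e ^ 3 * 0 ≤ e ^ 3 * (infLap φ x₀ + ‖gradient φ x₀‖ ^ 4) := by linarith [h1.2]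
      linarith [le_of_mul_le_mul_left this he3]
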